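/- The matrix T = [[0,0,0],[1,2,0],[1,0,2]] is unitarily equivalent to a complex symmetric matrix. -/

import Mathlib

open scoped ComplexConjugate
open Matrix

/-- Paper-convention inner product on ℂⁿ: ⟨x,y⟩ = ∑ xᵢ conj(yᵢ). -/
noncomputable def cinner {n : ℕ} (x y : Fin n → ℂ) : ℂ := ∑ i, x i * conj (y i)

/-- A conjugation on ℂⁿ: a conjugate-linear isometric involution. -/
structure Conjugation (n : ℕ) where
  toFun : (Fin n → ℂ) → (Fin n → ℂ)
  map_add : ∀ x y, toFun (x + y) = toFun x + toFun y
  map_smul : ∀ (a : ℂ) (x), toFun (a • x) = conj a • toFun x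
  isometric : ∀ x y, cinner (toFun x) (toFun y) = cinner y x
  involutive : ∀ x, toFun (toFun x) = x

/-- `T` is unitarily equivalent to a complex symmetric matrix. -/
def UECSM {n : ℕ} (T : Matrix (Fin n) (Fin n) ℂ) : Prop :=
  ∃ Q ∈ Matrix.unitaryGroup (Fin n) ℂ, (Qᴴ * T * Q)ᵀ = Qᴴ * T * Q

set_option maxHeartbeats 2000000 in
theorem example_3x3_uecsm : UECSM !![(0 : ℂ), 0, 0; 1, 2, 0; 1, 0, 2] := by
  obtain ⟨r, hr⟩ : ∃ r : ℝ, r * r = 6 := ⟨Real.sqrt 6, Real.mul_self_sqrt (by norm_num)⟩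
  have hr' : (r : ℂ) * (r : ℂ) = 6 := by
    have := congrArg (Complex.ofReal) hr; push_cast at this; exact this
  have hI : Complex.I * Complex.I = -1 := Complex.I_mul_I
  refine ⟨!![(1/2 : ℂ) + (1/2 : ℂ) * Complex.I + (1/6 : ℂ) * (r:ℂ) + (-1/6 : ℂ) * (r:ℂ) * Complex.I, (-1/12 : ℂ) * (r:ℂ) + (1/12 : ℂ) * (r:ℂ) * Complex.I, (-1/12 : ℂ) * (r:ℂ) + (1/12 : ℂ) * (r:ℂ) * Complex.I;
        (-1/12 : ℂ) * (r:ℂ) + (1/12 : ℂ) * (r:ℂ) * Complex.I, (3/4 : ℂ) + (1/4 : ℂ) * Complex.I + (-1/12 : ℂ) * (r:ℂ) + (1/12 : ℂ) * (r:ℂ) * Complex.I, (-1/4 : ℂ) + (1/4 : ℂ) * Complex.I + (-1/12 : ℂ) * (r:ℂ) + (1/12 : ℂ) * (r:ℂ) * Complex.I;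
        (-1/12 : ℂ) * (r:ℂ) + (1/12 : ℂ) * (r:ℂ) * Complex.I, (-1/4 : ℂ) + (1/4 : ℂ) * Complex.I + (-1/12 : ℂ) * (r:ℂ) + (1/12 : ℂ) * (r:ℂ) * Complex.I, (3/4 : ℂ) + (1/4 : ℂ) * Complex.I + (-1/12 : ℂ) * (r:ℂ) + (1/12 : ℂ) * (r:ℂ) * Complex.I], ?_, ?_⟩
  · rw [Matrix.mem_unitaryGroup_iff]
    ext i j
    fin_cases i <;> fin_cases j
    · simp [Matrix.mul_apply, Fin.sum_univ_three, Matrix.star_apply, Complex.star_def,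
        Matrix.vecHead, Matrix.vecTail,
        Complex.conj_ofNat, Complex.conj_ofReal, Complex.conj_I, Matrix.one_apply]
      try linear_combination ((1/12 : ℂ)) * hr' + ((-1/4 : ℂ) + (1/6 : ℂ) * (r:ℂ) + (-1/24 : ℂ) * (r:ℂ)^2) * hI
    · simp [Matrix.mul_apply, Fin.sum_univ_three, Matrix.star_apply, Complex.star_def,
        Matrix.vecHead, Matrix.vecTail,
        Complex.conj_ofNat, Complex.conj_ofReal, Complex.conj_I, Matrix.one_apply]
      try linear_combination ((0:ℂ)) * hr' + ((-1/12 : ℂ) * (r:ℂ)) * hI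
    · simp [Matrix.mul_apply, Fin.sum_univ_three, Matrix.star_apply, Complex.star_def,
        Matrix.vecHead, Matrix.vecTail,
        Complex.conj_ofNat, Complex.conj_ofReal, Complex.conj_I, Matrix.one_apply]
      try linear_combination ((0:ℂ)) * hr' + ((-1/12 : ℂ) * (r:ℂ)) * hI
    · simp [Matrix.mul_apply, Fin.sum_univ_three, Matrix.star_apply, Complex.star_def,
        Matrix.vecHead, Matrix.vecTail,
        Complex.conj_ofNat, Complex.conj_ofReal, Complex.conj_I, Matrix.one_apply]
      try linear_combination ((0:ℂ)) * hr' + ((-1/12 : ℂ) * (r:ℂ)) * hI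
    · simp [Matrix.mul_apply, Fin.sum_univ_three, Matrix.star_apply, Complex.star_def,
        Matrix.vecHead, Matrix.vecTail,
        Complex.conj_ofNat, Complex.conj_ofReal, Complex.conj_I, Matrix.one_apply]
      try linear_combination ((1/24 : ℂ)) * hr' + ((-1/8 : ℂ) + (-1/12 : ℂ) * (r:ℂ) + (-1/48 : ℂ) * (r:ℂ)^2) * hI
    · simp [Matrix.mul_apply, Fin.sum_univ_three, Matrix.star_apply, Complex.star_def,
        Matrix.vecHead, Matrix.vecTail,
        Complex.conj_ofNat, Complex.conj_ofReal, Complex.conj_I, Matrix.one_apply]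
      try linear_combination ((1/24 : ℂ)) * hr' + ((-1/8 : ℂ) + (-1/12 : ℂ) * (r:ℂ) + (-1/48 : ℂ) * (r:ℂ)^2) * hI
    · simp [Matrix.mul_apply, Fin.sum_univ_three, Matrix.star_apply, Complex.star_def,
        Matrix.vecHead, Matrix.vecTail,
        Complex.conj_ofNat, Complex.conj_ofReal, Complex.conj_I, Matrix.one_apply]
      try linear_combination ((0:ℂ)) * hr' + ((-1/12 : ℂ) * (r:ℂ)) * hI
    · simp [Matrix.mul_apply, Fin.sum_univ_three, Matrix.star_apply, Complex.star_def,
        Matrix.vecHead, Matrix.vecTail,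
        Complex.conj_ofNat, Complex.conj_ofReal, Complex.conj_I, Matrix.one_apply]
      try linear_combination ((1/24 : ℂ)) * hr' + ((-1/8 : ℂ) + (-1/12 : ℂ) * (r:ℂ) + (-1/48 : ℂ) * (r:ℂ)^2) * hI
    · simp [Matrix.mul_apply, Fin.sum_univ_three, Matrix.star_apply, Complex.star_def,
        Matrix.vecHead, Matrix.vecTail,
        Complex.conj_ofNat, Complex.conj_ofReal, Complex.conj_I, Matrix.one_apply]
      try linear_combination ((1/24 : ℂ)) * hr' + ((-1/8 : ℂ) + (-1/12 : ℂ) * (r:ℂ) + (-1/48 : ℂ) * (r:ℂ)^2) * hI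
  · ext i j
    fin_cases i <;> fin_cases j
    · simp [Matrix.mul_apply, Fin.sum_univ_three, Matrix.conjTranspose_apply, Complex.star_def,
        Matrix.transpose_apply, Matrix.vecHead, Matrix.vecTail,
        Complex.conj_ofNat, Complex.conj_ofReal, Complex.conj_I]
      try linear_combination ((0:ℂ)) * hr' + ((0:ℂ)) * hI
    · simp [Matrix.mul_apply, Fin.sum_univ_three, Matrix.conjTranspose_apply, Complex.star_def,
        Matrix.transpose_apply, Matrix.vecHead, Matrix.vecTail,
        Complex.conj_ofNat, Complex.conj_ofReal, Complex.conj_I]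
      try linear_combination ((-1/12 : ℂ)) * hr' + ((-1/4 : ℂ) + (1/24 : ℂ) * (r:ℂ)^2) * hI
    · simp [Matrix.mul_apply, Fin.sum_univ_three, Matrix.conjTranspose_apply, Complex.star_def,
        Matrix.transpose_apply, Matrix.vecHead, Matrix.vecTail,
        Complex.conj_ofNat, Complex.conj_ofReal, Complex.conj_I]
      try linear_combination ((-1/12 : ℂ)) * hr' + ((-1/4 : ℂ) + (1/24 : ℂ) * (r:ℂ)^2) * hI
    · simp [Matrix.mul_apply, Fin.sum_univ_three, Matrix.conjTranspose_apply, Complex.star_def,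
        Matrix.transpose_apply, Matrix.vecHead, Matrix.vecTail,
        Complex.conj_ofNat, Complex.conj_ofReal, Complex.conj_I]
      try linear_combination ((1/12 : ℂ)) * hr' + ((1/4 : ℂ) + (-1/24 : ℂ) * (r:ℂ)^2) * hI
    · simp [Matrix.mul_apply, Fin.sum_univ_three, Matrix.conjTranspose_apply, Complex.star_def,
        Matrix.transpose_apply, Matrix.vecHead, Matrix.vecTail,
        Complex.conj_ofNat, Complex.conj_ofReal, Complex.conj_I]
      try linear_combination ((0:ℂ)) * hr' + ((0:ℂ)) * hI
    · simp [Matrix.mul_apply, Fin.sum_univ_three, Matrix.conjTranspose_apply, Complex.star_def,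
        Matrix.transpose_apply, Matrix.vecHead, Matrix.vecTail,
        Complex.conj_ofNat, Complex.conj_ofReal, Complex.conj_I]
      try linear_combination ((0:ℂ)) * hr' + ((0:ℂ)) * hI
    · simp [Matrix.mul_apply, Fin.sum_univ_three, Matrix.conjTranspose_apply, Complex.star_def,
        Matrix.transpose_apply, Matrix.vecHead, Matrix.vecTail,
        Complex.conj_ofNat, Complex.conj_ofReal, Complex.conj_I]
      try linear_combination ((1/12 : ℂ)) * hr' + ((1/4 : ℂ) + (-1/24 : ℂ) * (r:ℂ)^2) * hI
    · simp [Matrix.mul_apply, Fin.sum_univ_three, Matrix.conjTranspose_apply, Complex.star_def,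
        Matrix.transpose_apply, Matrix.vecHead, Matrix.vecTail,
        Complex.conj_ofNat, Complex.conj_ofReal, Complex.conj_I]
      try linear_combination ((0:ℂ)) * hr' + ((0:ℂ)) * hI
    · simp [Matrix.mul_apply, Fin.sum_univ_three, Matrix.conjTranspose_apply, Complex.star_def,
        Matrix.transpose_apply, Matrix.vecHead, Matrix.vecTail,
        Complex.conj_ofNat, Complex.conj_ofReal, Complex.conj_I]
      try linear_combination ((0:ℂ)) * hr' + ((0:ℂ)) * hI
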